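/- Let (X, w) be a weighted pure d-dimensional simplicial complex whose 1-skeleton is a γ-spectral expander, let 1 ≤ k ≤ d, and let f ∈ C^k(X; ℝ) with ⟨f, 1⟩ = 0 (a 0-level cochain with respect to localization). Then ‖d_0^* ⋯ d_{k−1}^* f‖² ≤ (1 − (k/(k+1))(1 − γ)) ‖f‖². -/

import Mathlib

/-!
Weighted pure simplicial complexes, links, cochains, signless differentials
and high dimensional random walk operators.

Conventions: faces are `Finset`s of vertices. A cochain "of dimension `k`"
(an element of `C^k(X;ℝ)`) is represented by a function `Finset V → ℝ`
evaluated on faces of **cardinality** `c = k + 1`; all operators are indexed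
by cardinality.
-/

open Finset

namespace HDRW

noncomputable section

variable {V : Type*} [DecidableEq V] [Fintype V]

/-- A weighted family of faces (the data of a weighted complex or of a link). -/
structure WFam (V : Type*) [DecidableEq V] [Fintype V] where
  faces : Finset (Finset V)
  w : Finset V → ℝ

namespace WFam

/-- The faces of cardinality `c` (i.e. of dimension `c - 1`). -/
def dimFaces (Y : WFam V) (c : ℕ) : Finset (Finset V) :=
  Y.faces.filter fun σ => σ.card = c

/-- The link of a face `τ`, as a weighted family; the weights are
`w_τ(s) = w (s ∪ τ) / (C(|s| + |τ|, |τ|) * w τ)`. -/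
def link (Y : WFam V) (τ : Finset V) : WFam V where
  faces := Finset.univ.powerset.filter fun s => Disjoint s τ ∧ s ∪ τ ∈ Y.faces
  w := fun s => Y.w (s ∪ τ) / (((s.card + τ.card).choose τ.card : ℝ) * Y.w τ)

/-- The inner product of two `c`-cochains: `⟨f, g⟩ = Σ_{σ} w σ * f σ * g σ`. -/
def inner (Y : WFam V) (c : ℕ) (f g : Finset V → ℝ) : ℝ :=
  ∑ σ ∈ Y.dimFaces c, Y.w σ * (f σ * g σ)

/-- The squared norm `‖f‖² = ⟨f, f⟩` of a `c`-cochain. -/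
def norm2 (Y : WFam V) (c : ℕ) (f : Finset V → ℝ) : ℝ := Y.inner c f f

end WFam

/-- The signless differential `d` from cochains on faces of cardinality `c`
(dimension `c-1`) to cochains on faces of cardinality `c+1`:
`(d f)(σ) = (1/(c+1)) Σ_{τ ⊆ σ, |τ| = c} f τ`. -/
def sDiff (c : ℕ) (f : Finset V → ℝ) : Finset V → ℝ :=
  fun σ => ((c : ℝ) + 1)⁻¹ * ∑ τ ∈ σ.powerset.filter (fun τ => τ.card = c), f τ

/-- Iterated signless differential `C_a → C_{a+n}` (in cardinality indexing),
i.e. `d_{a+n-2} ⋯ d_{a-1}` in dimension indexing. -/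
def sDiffIter (a : ℕ) : ℕ → (Finset V → ℝ) → (Finset V → ℝ)
  | 0, f => f
  | n + 1, f => sDiff (a + n) (sDiffIter a n f)

namespace WFam

/-- The adjoint `d^*` of the signless differential, from cochains on faces of
cardinality `c+1` to cochains on faces of cardinality `c`; it is given by the
explicit formula `(d^* f)(τ) = Σ_{σ ∈ X(c), τ ⊆ σ} w_τ(σ ∖ τ) * f σ` (a sum
over the cardinality-`(c+1)` faces containing `τ`). -/
def sAdj (Y : WFam V) (c : ℕ) (f : Finset V → ℝ) : Finset V → ℝ :=
  fun τ => ∑ σ ∈ (Y.dimFaces (c + 1)).filter (fun σ => τ ⊆ σ),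
    (Y.link τ).w (σ \ τ) * f σ

/-- Iterated adjoint of the signless differential, `C_{a+n} → C_a`
(in cardinality indexing), i.e. `d_{a-1}^* ⋯ d_{a+n-2}^*`. -/
def sAdjIter (Y : WFam V) : ℕ → ℕ → (Finset V → ℝ) → (Finset V → ℝ)
  | _, 0, f => f
  | a, n + 1, f => Y.sAdj a (sAdjIter Y (a + 1) n f)

/-- The non-lazy up-down random walk operator `M⁺` on cochains of cardinality
`c` (dimension `k = c-1`): `(M⁺ f)(σ) = (1/(k+1)) Σ_{τ, σ ∪ τ ∈ X(k+1)} w_σ(τ∖σ) f τ`. -/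
def nonLazy (Y : WFam V) (c : ℕ) (f : Finset V → ℝ) : Finset V → ℝ :=
  fun σ => (c : ℝ)⁻¹ *
    ∑ τ ∈ (Y.dimFaces c).filter (fun τ => σ ∪ τ ∈ Y.dimFaces (c + 1)),
      (Y.link σ).w (τ \ σ) * f τ

/-- The (lazy) up-down random walk operator `U` on cochains of cardinality `c`
(dimension `k = c-1`):
`(U f)(σ) = (1/(k+2)) f σ + (1/(k+2)) Σ_{τ, σ ∪ τ ∈ X(k+1)} w_σ(τ∖σ) f τ`. -/
def upDown (Y : WFam V) (c : ℕ) (f : Finset V → ℝ) : Finset V → ℝ :=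
  fun σ => ((c : ℝ) + 1)⁻¹ * f σ + ((c : ℝ) + 1)⁻¹ *
    ∑ τ ∈ (Y.dimFaces c).filter (fun τ => σ ∪ τ ∈ Y.dimFaces (c + 1)),
      (Y.link σ).w (τ \ σ) * f τ

/-- The down-up random walk operator `D` on cochains of cardinality `c`
(dimension `k = c-1`). -/
def downUp (Y : WFam V) (c : ℕ) (f : Finset V → ℝ) : Finset V → ℝ :=
  fun σ => (c : ℝ)⁻¹ *
      (∑ τ' ∈ σ.powerset.filter (fun τ' => τ'.card = c - 1), (Y.link τ').w (σ \ τ')) * f σ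
    + (c : ℝ)⁻¹ *
      ∑ τ ∈ (Y.dimFaces c).filter (fun τ => τ ≠ σ ∧ σ ∩ τ ∈ Y.dimFaces (c - 1)),
        (Y.link (σ ∩ τ)).w (τ \ σ) * f τ

/-- The `i`-down-up operator `D^i = d ⋯ d d^* ⋯ d^*` (going down `i+1` steps and
back up) on cochains of cardinality `c` (dimension `k = c-1`); in dimension
indexing this is `D_k^i = d_{k-1} ⋯ d_{k-i-1} d_{k-i-1}^* ⋯ d_{k-1}^*`. -/
def downUpIter (Y : WFam V) (c i : ℕ) (f : Finset V → ℝ) : Finset V → ℝ :=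
  sDiffIter (c - (i + 1)) (i + 1) (Y.sAdjIter (c - (i + 1)) (i + 1) f)

/-- `Y` (through its 1-skeleton) is a `γ`-(one sided) spectral expander:
every function on the vertices orthogonal to the constants has Rayleigh
quotient of the non-lazy random walk at most `γ` (Rayleigh characterization of
"the second largest eigenvalue of `M₀⁺` is at most `γ`"). -/
def isExpander (Y : WFam V) (γ : ℝ) : Prop :=
  ∀ f : Finset V → ℝ, Y.inner 1 f (fun _ => 1) = 0 →
    Y.inner 1 (Y.nonLazy 1 f) f ≤ γ * Y.norm2 1 f

/-- `Y` (through its 1-skeleton) is connected: the eigenvalue `1` of the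
non-lazy random walk `M₀⁺` has multiplicity one, i.e. every nonzero function on
the vertices orthogonal to the constants has Rayleigh quotient strictly
less than `1`. -/
def isConnected (Y : WFam V) : Prop :=
  ∀ f : Finset V → ℝ, Y.inner 1 f (fun _ => 1) = 0 → Y.norm2 1 f ≠ 0 →
    Y.inner 1 (Y.nonLazy 1 f) f < Y.norm2 1 f

/-- `f` is an `i`-level cochain of cardinality `c` (dimension `k = c-1`) with
respect to localization: for every face `σ` of cardinality `i` (i.e. of
dimension `i-1`), the localization `f_σ` is orthogonal to the constants in the
link `X_σ`. -/
def isLevel (Y : WFam V) (i c : ℕ) (f : Finset V → ℝ) : Prop :=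
  ∀ σ ∈ Y.dimFaces i,
    (Y.link σ).inner (c - i) (fun s => f (σ ∪ s)) (fun _ => 1) = 0

/-- `f` is a proper `i`-level cochain of cardinality `c`: it is an `i`-level
cochain which is in addition orthogonal to every `(i+1)`-level cochain. -/
def isProperLevel (Y : WFam V) (i c : ℕ) (f : Finset V → ℝ) : Prop :=
  Y.isLevel i c f ∧ ∀ g : Finset V → ℝ, Y.isLevel (i + 1) c g → Y.inner c f g = 0

end WFam

/-- The coboundary operator on oriented cochains (represented by their values
on the increasing ordering of each face, with respect to a linear order on the
vertices): `(δ f)(σ) = Σ_{j} (-1)^j f(σ ∖ {j-th smallest element of σ})`. -/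
def coboundary {V : Type*} [LinearOrder V] [Fintype V] (f : Finset V → ℝ) :
    Finset V → ℝ :=
  fun σ => ∑ v ∈ σ, (-1 : ℝ) ^ (σ.filter (fun u => u < v)).card * f (σ.erase v)

/-- A weighted pure `d`-dimensional simplicial complex: a downward closed
family of faces, each contained in a face of cardinality `d+1`
(dimension `d`), together with a weight function `w : X → (0, 1]` summing to
`1` on the top faces and satisfying the averaging recurrence on lower faces. -/
structure WSC (V : Type*) [DecidableEq V] [Fintype V] (d : ℕ) extends WFam V where
  empty_mem : ∅ ∈ faces
  down_closed : ∀ ⦃σ⦄, σ ∈ faces → ∀ ⦃τ⦄, τ ⊆ σ → τ ∈ faces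
  isPure : ∀ σ ∈ faces, ∃ σ' ∈ faces, σ ⊆ σ' ∧ σ'.card = d + 1
  w_pos : ∀ σ ∈ faces, 0 < w σ
  w_le_one : ∀ σ ∈ faces, w σ ≤ 1
  w_sum_top : ∑ σ ∈ faces.filter (fun σ => σ.card = d + 1), w σ = 1
  w_down : ∀ τ ∈ faces, τ.card ≤ d →
    w τ = (((d + 1).choose τ.card : ℝ))⁻¹ *
      ∑ σ ∈ faces.filter (fun σ => σ.card = d + 1 ∧ τ ⊆ σ), w σ


variable {d : ℕ}
/-! ### Auxiliary lemmas -/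

section Aux

/-- Swap a double sum where the inner range is a filter depending on the outer index. -/
lemma sum_swap_filter {α β : Type*} (A : Finset α) (B : Finset β)
    (p : α → β → Prop) [∀ a b, Decidable (p a b)] (F : α → β → ℝ) :
    ∑ a ∈ A, ∑ b ∈ B.filter (fun b => p a b), F a b
      = ∑ b ∈ B, ∑ a ∈ A.filter (fun a => p a b), F a b := by
  simp only [Finset.sum_filter]
  exact Finset.sum_comm

lemma card_between {τ t : Finset V} (hsub : τ ⊆ t) {c' : ℕ} (hcc : τ.card ≤ c') :
    (t.powerset.filter (fun σ => τ ⊆ σ ∧ σ.card = c')).card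
      = (t.card - τ.card).choose (c' - τ.card) := by
  rw [← Finset.card_sdiff_of_subset hsub, ← Finset.card_powersetCard]
  apply Finset.card_nbij' (i := fun σ => σ \ τ) (j := fun s => s ∪ τ)
  · intro σ hσ
    simp only [Finset.mem_coe, Finset.mem_filter, Finset.mem_powerset] at hσ
    obtain ⟨h1, h2, h3⟩ := hσ
    simp only [Finset.mem_coe, Finset.mem_powersetCard]
    exact ⟨Finset.sdiff_subset_sdiff h1 (by rfl), by rw [Finset.card_sdiff_of_subset h2, h3]⟩
  · intro s hs
    simp only [Finset.mem_coe, Finset.mem_powersetCard] at hs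
    obtain ⟨h1, h2⟩ := hs
    have hdisj : Disjoint s τ := Finset.disjoint_of_subset_left h1 Finset.sdiff_disjoint
    simp only [Finset.mem_coe, Finset.mem_filter, Finset.mem_powerset]
    refine ⟨Finset.union_subset (h1.trans Finset.sdiff_subset) hsub,
      Finset.subset_union_right, ?_⟩
    rw [Finset.card_union_of_disjoint hdisj, h2]
    omega
  · intro σ hσ
    simp only [Finset.mem_coe, Finset.mem_filter, Finset.mem_powerset] at hσ
    exact Finset.sdiff_union_of_subset hσ.2.1
  · intro s hs
    simp only [Finset.mem_coe, Finset.mem_powersetCard] at hs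
    have hdisj : Disjoint s τ := Finset.disjoint_of_subset_left hs.1 Finset.sdiff_disjoint
    exact Finset.union_sdiff_cancel_right hdisj

variable {d : ℕ}

lemma wsum_top' (X : WSC V d) :
    ∑ σ ∈ X.faces.filter (fun σ => σ.card = d + 1 ∧ (∅ : Finset V) ⊆ σ), X.w σ = 1 := by
  rw [← X.w_sum_top]
  apply Finset.sum_congr _ (fun _ _ => rfl)
  apply Finset.filter_congr
  intro σ _
  simp

lemma w_empty (X : WSC V d) : X.w ∅ = 1 := by
  have h := X.w_down ∅ X.empty_mem (by simp)
  rw [h, wsum_top' X]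
  simp

/-- Key weight identity: the sum of the weights of the cardinality-`c'` faces
containing a fixed face `τ` equals `C(c', |τ|) · w τ`. -/
lemma sum_w_supersets (X : WSC V d) {τ : Finset V} (hτ : τ ∈ X.faces) {c' : ℕ}
    (h1 : τ.card ≤ c') (h2 : c' ≤ d + 1) :
    ∑ σ ∈ (X.toWFam.dimFaces c').filter (fun σ => τ ⊆ σ), X.w σ
      = (c'.choose τ.card : ℝ) * X.w τ := by
  rcases Nat.lt_or_ge c' (d + 1) with hlt | hge
  · -- c' ≤ d
    have hc'd : c' ≤ d := by omega
    have hτd : τ.card ≤ d := le_trans h1 hc'd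
    have step1 : ∑ σ ∈ (X.toWFam.dimFaces c').filter (fun σ => τ ⊆ σ), X.w σ
        = (((d + 1).choose c' : ℝ))⁻¹ *
          ∑ σ ∈ (X.toWFam.dimFaces c').filter (fun σ => τ ⊆ σ),
              ∑ t ∈ X.faces.filter (fun t => t.card = d + 1 ∧ σ ⊆ t), X.w t := by
      rw [Finset.mul_sum]
      apply Finset.sum_congr rfl
      intro σ hσ
      simp only [WFam.dimFaces, Finset.mem_filter] at hσ
      have hcc : σ.card ≤ d := by rw [hσ.1.2]; exact hc'd
      rw [X.w_down σ hσ.1.1 hcc, hσ.1.2]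
    rw [step1]
    rw [sum_swap_filter ((X.toWFam.dimFaces c').filter (fun σ => τ ⊆ σ)) X.faces
        (fun σ t => t.card = d + 1 ∧ σ ⊆ t) (fun _ t => X.w t)]
    have step3 : ∀ t ∈ X.faces,
        ∑ σ ∈ ((X.toWFam.dimFaces c').filter (fun σ => τ ⊆ σ)).filter
            (fun σ => t.card = d + 1 ∧ σ ⊆ t), X.w t
        = if t.card = d + 1 ∧ τ ⊆ t
            then ((d + 1 - τ.card).choose (c' - τ.card) : ℝ) * X.w t else 0 := by
      intro t ht
      rw [Finset.sum_const]
      split_ifs with hcond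
      · have hseteq : ((X.toWFam.dimFaces c').filter (fun σ => τ ⊆ σ)).filter
            (fun σ => t.card = d + 1 ∧ σ ⊆ t)
            = t.powerset.filter (fun σ => τ ⊆ σ ∧ σ.card = c') := by
          ext σ
          simp only [WFam.dimFaces, Finset.mem_filter, Finset.mem_powerset]
          constructor
          · rintro ⟨⟨⟨hf, hc⟩, hτσ⟩, hd, hσt⟩
            exact ⟨hσt, hτσ, hc⟩
          · rintro ⟨hσt, hτσ, hc⟩
            exact ⟨⟨⟨X.down_closed ht hσt, hc⟩, hτσ⟩, hcond.1, hσt⟩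
        rw [hseteq, card_between hcond.2 h1, hcond.1]
        simp [nsmul_eq_mul]
      · have hempty : ((X.toWFam.dimFaces c').filter (fun σ => τ ⊆ σ)).filter
            (fun σ => t.card = d + 1 ∧ σ ⊆ t) = ∅ := by
          rw [Finset.filter_eq_empty_iff]
          intro σ hσ
          simp only [WFam.dimFaces, Finset.mem_filter] at hσ
          intro hcc
          exact hcond ⟨hcc.1, hσ.2.trans hcc.2⟩
        rw [hempty]
        simp
    rw [Finset.sum_congr rfl step3, ← Finset.sum_filter, ← Finset.mul_sum]
    have hw := X.w_down τ hτ hτd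
    rw [hw]
    have key : ((d + 1).choose τ.card : ℝ) * (((d + 1) - τ.card).choose (c' - τ.card) : ℝ)
        = ((d + 1).choose c' : ℝ) * (c'.choose τ.card : ℝ) := by
      exact_mod_cast (Nat.choose_mul (n := d + 1) h1).symm
    have hne1 : ((d + 1).choose c' : ℝ) ≠ 0 :=
      Nat.cast_ne_zero.mpr (Nat.choose_pos h2).ne'
    have hne2 : ((d + 1).choose τ.card : ℝ) ≠ 0 :=
      Nat.cast_ne_zero.mpr (Nat.choose_pos (by omega : τ.card ≤ d + 1)).ne'
    set S := ∑ t ∈ X.faces.filter (fun t => t.card = d + 1 ∧ τ ⊆ t), X.w t with hS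
    field_simp
    linear_combination S * key
  · -- c' = d + 1
    have hc' : c' = d + 1 := by omega
    subst hc'
    have hset : (X.toWFam.dimFaces (d + 1)).filter (fun σ => τ ⊆ σ)
        = X.faces.filter (fun σ => σ.card = d + 1 ∧ τ ⊆ σ) := by
      rw [WFam.dimFaces, Finset.filter_filter]
    rcases Nat.lt_or_ge τ.card (d + 1) with hlt2 | hge2
    · have hw := X.w_down τ hτ (by omega)
      rw [hset, hw]
      have hpos : (0 : ℝ) < ((d + 1).choose τ.card : ℝ) := by
        exact_mod_cast Nat.choose_pos (by omega : τ.card ≤ d + 1)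
      field_simp
    · have hcard : τ.card = d + 1 := by omega
      have hset2 : (X.toWFam.dimFaces (d + 1)).filter (fun σ => τ ⊆ σ) = {τ} := by
        rw [hset]
        ext σ
        simp only [Finset.mem_filter, Finset.mem_singleton]
        constructor
        · rintro ⟨hσf, hσc, hτσ⟩
          exact (Finset.eq_of_subset_of_card_le hτσ (by omega)).symm
        · rintro rfl
          exact ⟨hτ, hcard, subset_rfl⟩
      rw [hset2, Finset.sum_singleton, hcard, Nat.choose_self]
      simp

lemma sum_w_dimFaces (X : WSC V d) {c' : ℕ} (h2 : c' ≤ d + 1) :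
    ∑ σ ∈ X.toWFam.dimFaces c', X.w σ = 1 := by
  have h := sum_w_supersets X X.empty_mem (Nat.zero_le c') h2
  rw [Finset.filter_true_of_mem (fun _ _ => Finset.empty_subset _)] at h
  simpa [w_empty X] using h

lemma inner_comm' (Y : WFam V) (c : ℕ) (f g : Finset V → ℝ) :
    Y.inner c f g = Y.inner c g f :=
  Finset.sum_congr rfl fun _ _ => by ring

lemma inner_congr_left (Y : WFam V) (c : ℕ) {f f' : Finset V → ℝ} (g : Finset V → ℝ)
    (h : ∀ σ ∈ Y.dimFaces c, f σ = f' σ) : Y.inner c f g = Y.inner c f' g :=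
  Finset.sum_congr rfl fun σ hσ => by rw [h σ hσ]

lemma norm2_nonneg (X : WSC V d) (c : ℕ) (u : Finset V → ℝ) :
    0 ≤ X.toWFam.norm2 c u := by
  apply Finset.sum_nonneg
  intro σ hσ
  simp only [WFam.dimFaces, Finset.mem_filter] at hσ
  exact mul_nonneg (le_of_lt (X.w_pos σ hσ.1)) (mul_self_nonneg _)

lemma singleton_disjoint {ρ ρ' : Finset V} (h1 : ρ.card = 1) (h2 : ρ'.card = 1)
    (hne : ρ ≠ ρ') : Disjoint ρ ρ' := by
  obtain ⟨u, rfl⟩ := Finset.card_eq_one.mp h1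
  obtain ⟨v, rfl⟩ := Finset.card_eq_one.mp h2
  simp only [Finset.disjoint_singleton]
  intro huv
  exact hne (by rw [huv])

lemma singleton_union_card {ρ ρ' : Finset V} (h1 : ρ.card = 1) (h2 : ρ'.card = 1)
    (hne : ρ ≠ ρ') : (ρ ∪ ρ').card = 2 := by
  rw [Finset.card_union_of_disjoint (singleton_disjoint h1 h2 hne), h1, h2]

lemma ne_of_union_card {ρ ρ' : Finset V} (h1 : ρ.card = 1)
    (hc : (ρ ∪ ρ').card = 2) : ρ ≠ ρ' := by
  intro h
  rw [h, Finset.union_self] at hc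
  rw [h] at h1
  omega

/-- The Cauchy–Schwarz inequality for the weighted inner product. -/
lemma inner_sq_le (X : WSC V d) (c : ℕ) (u v : Finset V → ℝ) :
    (X.toWFam.inner c u v) ^ 2 ≤ X.toWFam.norm2 c u * X.toWFam.norm2 c v := by
  have hrw : X.toWFam.inner c u v = ∑ σ ∈ X.toWFam.dimFaces c,
      (Real.sqrt (X.w σ) * u σ) * (Real.sqrt (X.w σ) * v σ) := by
    apply Finset.sum_congr rfl
    intro σ hσ
    simp only [WFam.dimFaces, Finset.mem_filter] at hσ
    have : Real.sqrt (X.w σ) * Real.sqrt (X.w σ) = X.w σ :=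
      Real.mul_self_sqrt (le_of_lt (X.w_pos σ hσ.1))
    calc X.w σ * (u σ * v σ) = Real.sqrt (X.w σ) * Real.sqrt (X.w σ) * (u σ * v σ) := by rw [this]
    _ = (Real.sqrt (X.w σ) * u σ) * (Real.sqrt (X.w σ) * v σ) := by ring
  have hnorm : ∀ x : Finset V → ℝ, X.toWFam.norm2 c x
      = ∑ σ ∈ X.toWFam.dimFaces c, (Real.sqrt (X.w σ) * x σ) ^ 2 := by
    intro x
    apply Finset.sum_congr rfl
    intro σ hσ
    simp only [WFam.dimFaces, Finset.mem_filter] at hσ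
    have h1 : Real.sqrt (X.w σ) * Real.sqrt (X.w σ) = X.w σ :=
      Real.mul_self_sqrt (le_of_lt (X.w_pos σ hσ.1))
    calc X.w σ * (x σ * x σ)
        = (Real.sqrt (X.w σ) * Real.sqrt (X.w σ)) * (x σ * x σ) := by rw [h1]
      _ = (Real.sqrt (X.w σ) * x σ) ^ 2 := by ring
  rw [hrw, hnorm u, hnorm v]
  exact Finset.sum_mul_sq_le_sq_mul_sq _ _ _

/-- Adjointness of the signless differential. -/
lemma inner_sDiff (X : WSC V d) (c : ℕ) (u g : Finset V → ℝ) :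
    X.toWFam.inner (c + 1) (sDiff c u) g = X.toWFam.inner c u (X.toWFam.sAdj c g) := by
  simp only [WFam.inner, WFam.sAdj, sDiff]
  have lhs_eq : ∀ σ ∈ X.toWFam.dimFaces (c + 1),
      X.w σ * ((((c : ℝ) + 1)⁻¹ * ∑ τ ∈ σ.powerset.filter (fun τ => τ.card = c), u τ) * g σ)
        = ∑ τ ∈ (X.toWFam.dimFaces c).filter (fun τ => τ ⊆ σ),
            (((c : ℝ) + 1)⁻¹ * (X.w σ * g σ)) * u τ := by
    intro σ hσ
    simp only [WFam.dimFaces, Finset.mem_filter] at hσ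
    have hset : σ.powerset.filter (fun τ => τ.card = c)
        = (X.toWFam.dimFaces c).filter (fun τ => τ ⊆ σ) := by
      ext τ
      simp only [WFam.dimFaces, Finset.mem_filter, Finset.mem_powerset]
      exact ⟨fun ⟨hts, htc⟩ => ⟨⟨X.down_closed hσ.1 hts, htc⟩, hts⟩,
        fun ⟨⟨_, htc⟩, hts⟩ => ⟨hts, htc⟩⟩
    rw [hset, Finset.mul_sum, Finset.sum_mul, Finset.mul_sum]
    exact Finset.sum_congr rfl fun τ _ => by ring
  rw [Finset.sum_congr rfl lhs_eq,
    sum_swap_filter (X.toWFam.dimFaces (c + 1)) (X.toWFam.dimFaces c)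
      (fun σ τ => τ ⊆ σ) (fun σ τ => (((c : ℝ) + 1)⁻¹ * (X.w σ * g σ)) * u τ)]
  apply Finset.sum_congr rfl
  intro τ hτ
  simp only [WFam.dimFaces, Finset.mem_filter] at hτ
  have hwτ : X.w τ ≠ 0 := ne_of_gt (X.w_pos τ hτ.1)
  simp only [Finset.mul_sum]
  apply Finset.sum_congr rfl
  intro σ hσ
  simp only [WFam.dimFaces, Finset.mem_filter] at hσ
  have hτσ : τ ⊆ σ := hσ.2
  have hlink : (X.toWFam.link τ).w (σ \ τ) = X.w σ / (((c : ℝ) + 1) * X.w τ) := by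
    simp only [WFam.link]
    rw [Finset.sdiff_union_of_subset hτσ, Finset.card_sdiff_of_subset hτσ, hσ.1.2, hτ.2]
    norm_num
    rw [Nat.add_comm 1 c, Nat.choose_succ_self_right]
    push_cast
    ring_nf
  rw [hlink]
  field_simp

lemma sAdjIter_succ' (Y : WFam V) (a n : ℕ) (g : Finset V → ℝ) :
    Y.sAdjIter a (n + 1) g = Y.sAdjIter a n (Y.sAdj (a + n) g) := by
  induction n generalizing a g with
  | zero => rfl
  | succ n ih =>
    show Y.sAdj a (Y.sAdjIter (a + 1) (n + 1) g) = _
    rw [ih, Nat.add_right_comm a 1 n]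
    rfl

/-- Iterated adjointness. -/
lemma inner_sDiffIter (X : WSC V d) (a n : ℕ) (u g : Finset V → ℝ) :
    X.toWFam.inner (a + n) (sDiffIter a n u) g
      = X.toWFam.inner a u (X.toWFam.sAdjIter a n g) := by
  induction n generalizing g with
  | zero => rfl
  | succ n ih =>
    show X.toWFam.inner ((a + n) + 1) (sDiff (a + n) (sDiffIter a n u)) g = _
    rw [inner_sDiff X (a + n) (sDiffIter a n u) g, ih (X.toWFam.sAdj (a + n) g),
      ← sAdjIter_succ']

lemma sDiffIter_const_one (a n : ℕ) :
    ∀ σ : Finset V, σ.card = a + n → sDiffIter a n (fun _ => (1 : ℝ)) σ = 1 := by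
  induction n with
  | zero => intro σ _; rfl
  | succ n ih =>
    intro σ hσ
    show sDiff (a + n) (sDiffIter a n fun _ => (1 : ℝ)) σ = 1
    unfold sDiff
    rw [Finset.sum_congr rfl (fun τ hτ => ih τ (by
      simp only [Finset.mem_filter, Finset.mem_powerset] at hτ
      exact hτ.2))]
    rw [Finset.sum_const, ← Finset.powersetCard_eq_filter, Finset.card_powersetCard, hσ]
    have h2 : (a + (n + 1)).choose (a + n) = a + n + 1 := by
      rw [← Nat.add_assoc]; exact Nat.choose_succ_self_right _
    rw [h2]
    simp only [nsmul_eq_mul, mul_one]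
    have hne : ((a : ℝ) + n + 1) ≠ 0 := by positivity
    push_cast
    field_simp

lemma inner_one_sAdjIter (X : WSC V d) (a n : ℕ) (g : Finset V → ℝ) :
    X.toWFam.inner a (X.toWFam.sAdjIter a n g) (fun _ => 1)
      = X.toWFam.inner (a + n) g (fun _ => 1) := by
  rw [inner_comm' _ a, ← inner_sDiffIter X a n (fun _ => 1) g,
    inner_congr_left _ _ g (fun σ hσ => sDiffIter_const_one a n σ (by
      simp only [WFam.dimFaces, Finset.mem_filter] at hσ; exact hσ.2)),
    inner_comm']

lemma card_between' {τ t : Finset V} (hsub : τ ⊆ t) {c' : ℕ} (hcc : τ.card ≤ c') :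
    (t.powerset.filter (fun σ => σ.card = c' ∧ τ ⊆ σ)).card
      = (t.card - τ.card).choose (c' - τ.card) := by
  rw [← card_between hsub hcc]
  congr 1
  apply Finset.filter_congr
  intro σ _
  simp only [and_comm]

/-- The iterated signless differential of a `0`-cochain is the average of its
values on the vertices. -/
lemma sDiffIter_one_apply (n : ℕ) (h : Finset V → ℝ) :
    ∀ σ : Finset V, σ.card = n + 1 →
      sDiffIter 1 n h σ
        = ((n : ℝ) + 1)⁻¹ * ∑ ρ ∈ σ.powerset.filter (fun ρ => ρ.card = 1), h ρ := by
  induction n with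
  | zero =>
    intro σ hσ
    have hset : σ.powerset.filter (fun ρ => ρ.card = 1) = {σ} := by
      ext ρ
      simp only [Finset.mem_filter, Finset.mem_powerset, Finset.mem_singleton]
      constructor
      · rintro ⟨h1, h2⟩
        exact Finset.eq_of_subset_of_card_le h1 (by omega)
      · rintro rfl
        exact ⟨subset_rfl, hσ⟩
    simp [sDiffIter, hset]
  | succ n ih =>
    intro σ hσ
    show sDiff (1 + n) (sDiffIter 1 n h) σ = _
    unfold sDiff
    have step1 : ∑ τ ∈ σ.powerset.filter (fun τ => τ.card = 1 + n), sDiffIter 1 n h τ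
        = ∑ τ ∈ σ.powerset.filter (fun τ => τ.card = 1 + n),
            ∑ ρ ∈ (σ.powerset.filter (fun ρ => ρ.card = 1)).filter (fun ρ => ρ ⊆ τ),
              ((n : ℝ) + 1)⁻¹ * h ρ := by
      apply Finset.sum_congr rfl
      intro τ hτ
      simp only [Finset.mem_filter, Finset.mem_powerset] at hτ
      rw [ih τ (by omega)]
      rw [Finset.mul_sum]
      apply Finset.sum_congr
      · ext ρ
        simp only [Finset.mem_filter, Finset.mem_powerset]
        exact ⟨fun ⟨h1, h2⟩ => ⟨⟨h1.trans hτ.1, h2⟩, h1⟩, fun ⟨⟨_, h2⟩, h1⟩ => ⟨h1, h2⟩⟩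
      · intro ρ _; rfl
    rw [step1, sum_swap_filter (σ.powerset.filter (fun τ => τ.card = 1 + n))
      (σ.powerset.filter (fun ρ => ρ.card = 1)) (fun τ ρ => ρ ⊆ τ)
      (fun τ ρ => ((n : ℝ) + 1)⁻¹ * h ρ)]
    have step2 : ∀ ρ ∈ σ.powerset.filter (fun ρ => ρ.card = 1),
        ∑ τ ∈ (σ.powerset.filter (fun τ => τ.card = 1 + n)).filter (fun τ => ρ ⊆ τ),
            ((n : ℝ) + 1)⁻¹ * h ρ
          = ((n : ℝ) + 1) * (((n : ℝ) + 1)⁻¹ * h ρ) := by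
      intro ρ hρ
      simp only [Finset.mem_filter, Finset.mem_powerset] at hρ
      rw [Finset.sum_const, Finset.filter_filter]
      have hcard : (σ.powerset.filter (fun τ => τ.card = 1 + n ∧ ρ ⊆ τ)).card
          = (σ.card - ρ.card).choose (1 + n - ρ.card) := card_between' hρ.1 (by omega)
      rw [hcard, hρ.2, hσ]
      have : (n + 1 + 1 - 1).choose (1 + n - 1) = n + 1 := by
        simp only [Nat.add_sub_cancel]
        have : 1 + n - 1 = n := by omega
        rw [this]
        exact Nat.choose_succ_self_right n
      rw [this]
      simp [nsmul_eq_mul]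
    have hne : ((n : ℝ) + 1) ≠ 0 := by positivity
    rw [Finset.sum_congr rfl step2, ← Finset.mul_sum, ← Finset.mul_sum,
      mul_inv_cancel_left₀ hne, Nat.add_comm 1 n]

/-- Reformulation of the quadratic form of the non-lazy walk as a sum over
ordered pairs of vertices. -/
lemma inner_nonLazy_eq (X : WSC V d) (h : Finset V → ℝ) :
    X.toWFam.inner 1 (X.toWFam.nonLazy 1 h) h
      = ∑ σ ∈ X.toWFam.dimFaces 1, ∑ τ ∈ (X.toWFam.dimFaces 1).filter
          (fun τ => σ ∪ τ ∈ X.toWFam.dimFaces 2),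
            2⁻¹ * (X.w (σ ∪ τ) * (h σ * h τ)) := by
  unfold WFam.inner WFam.nonLazy
  apply Finset.sum_congr rfl
  intro σ hσ
  simp only [WFam.dimFaces, Finset.mem_filter] at hσ
  have hwσ : X.w σ ≠ 0 := ne_of_gt (X.w_pos σ hσ.1)
  simp only [Finset.mul_sum, Finset.sum_mul]
  apply Finset.sum_congr rfl
  intro τ hτ
  simp only [WFam.dimFaces, Finset.mem_filter] at hτ
  obtain ⟨⟨hτf, hτc⟩, hu⟩ := hτ
  have hne : σ ≠ τ := ne_of_union_card hσ.2 hu.2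
  have hdisj : Disjoint τ σ := singleton_disjoint hτc hσ.2 (Ne.symm hne)
  have hds : τ \ σ = τ := Finset.sdiff_eq_self_of_disjoint hdisj
  have hlink : (X.toWFam.link σ).w (τ \ σ) = X.w (σ ∪ τ) / (2 * X.w σ) := by
    simp only [WFam.link]
    rw [hds, Finset.union_comm τ σ, hτc, hσ.2]
    norm_num
  rw [hlink]
  push_cast
  field_simp

/-- The sum of the weights of the edges through a vertex, in "ordered pair" form. -/
lemma edge_sum (X : WSC V d) (hd : 1 ≤ d) {ρ : Finset V} (hρ : ρ ∈ X.toWFam.dimFaces 1) :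
    ∑ τ ∈ (X.toWFam.dimFaces 1).filter (fun τ => ρ ∪ τ ∈ X.toWFam.dimFaces 2), X.w (ρ ∪ τ)
      = 2 * X.w ρ := by
  simp only [WFam.dimFaces, Finset.mem_filter] at hρ
  have hstep : ∑ τ ∈ (X.toWFam.dimFaces 1).filter
        (fun τ => ρ ∪ τ ∈ X.toWFam.dimFaces 2), X.w (ρ ∪ τ)
      = ∑ e ∈ (X.toWFam.dimFaces 2).filter (fun e => ρ ⊆ e), X.w e := by
    apply Finset.sum_nbij' (i := fun τ => ρ ∪ τ) (j := fun e => e \ ρ)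
    · intro τ hτ
      simp only [WFam.dimFaces, Finset.mem_filter] at hτ ⊢
      exact ⟨hτ.2, Finset.subset_union_left⟩
    · intro e he
      simp only [WFam.dimFaces, Finset.mem_filter] at he ⊢
      obtain ⟨⟨hef, hec⟩, hρe⟩ := he
      refine ⟨⟨X.down_closed hef Finset.sdiff_subset, ?_⟩, ?_⟩
      · rw [Finset.card_sdiff_of_subset hρe, hec, hρ.2]
      · rw [Finset.union_sdiff_of_subset hρe]
        exact ⟨hef, hec⟩
    · intro τ hτ
      simp only [WFam.dimFaces, Finset.mem_filter] at hτ
      have hne : ρ ≠ τ := ne_of_union_card hρ.2 hτ.2.2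
      have hdisj : Disjoint τ ρ := singleton_disjoint hτ.1.2 hρ.2 (Ne.symm hne)
      rw [Finset.union_comm]
      exact Finset.union_sdiff_cancel_right hdisj
    · intro e he
      simp only [WFam.dimFaces, Finset.mem_filter] at he
      exact Finset.union_sdiff_of_subset he.2
    · intro τ hτ
      simp only [WFam.dimFaces, Finset.mem_filter] at hτ
      rfl
  rw [hstep, sum_w_supersets X hρ.1 (by omega) (by omega), hρ.2]
  norm_num

lemma filter_erase_eq {s : Finset (Finset V)} {p : Finset V → Prop} [DecidablePred p]
    (a : Finset V) : (s.filter p).erase a = s.filter (fun x => p x ∧ x ≠ a) := by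
  ext x
  simp only [Finset.mem_erase, Finset.mem_filter]
  tauto

lemma two_choose_two (k : ℕ) : (((k + 1).choose 2 : ℕ) : ℝ) * 2 = ((k : ℝ) + 1) * (k : ℝ) := by
  have h2 : 2 ∣ (k + 1) * k := by
    rw [Nat.mul_comm]
    exact (Nat.even_mul_succ_self k).two_dvd
  have hN : (k + 1).choose 2 * 2 = (k + 1) * k := by
    rw [Nat.choose_two_right, Nat.add_sub_cancel]
    exact Nat.div_mul_cancel h2
  exact_mod_cast hN

/-- The central computation: the squared norm of the iterated signless
differential of a `0`-cochain, in terms of its norm and the quadratic form of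
the non-lazy walk. -/
lemma norm2_sDiffIter (X : WSC V d) {k : ℕ} (hk1 : 1 ≤ k) (hk : k ≤ d) (h : Finset V → ℝ) :
    X.toWFam.norm2 (k + 1) (sDiffIter 1 k h)
      = (((k : ℝ) + 1)⁻¹ * ((k : ℝ) + 1)⁻¹) *
          (((k : ℝ) + 1) * X.toWFam.norm2 1 h
            + (k : ℝ) * ((k : ℝ) + 1) * X.toWFam.inner 1 (X.toWFam.nonLazy 1 h) h) := by
  set c1 : ℝ := ((k : ℝ) + 1)⁻¹ with hc1
  have hBset : ∀ σ ∈ X.toWFam.dimFaces (k + 1),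
      σ.powerset.filter (fun ρ => ρ.card = 1)
        = (X.toWFam.dimFaces 1).filter (fun ρ => ρ ⊆ σ) := by
    intro σ hσ
    simp only [WFam.dimFaces, Finset.mem_filter] at hσ
    ext ρ
    simp only [WFam.dimFaces, Finset.mem_filter, Finset.mem_powerset]
    exact ⟨fun ⟨h1, h2⟩ => ⟨⟨X.down_closed hσ.1 h1, h2⟩, h1⟩, fun ⟨⟨_, h2⟩, h1⟩ => ⟨h1, h2⟩⟩
  have claim0 : X.toWFam.norm2 (k + 1) (sDiffIter 1 k h)
      = (c1 * c1) * ∑ σ ∈ X.toWFam.dimFaces (k + 1),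
          ∑ ρ ∈ (X.toWFam.dimFaces 1).filter (fun ρ => ρ ⊆ σ),
            ∑ ρ' ∈ (X.toWFam.dimFaces 1).filter (fun ρ' => ρ' ⊆ σ),
              X.w σ * (h ρ * h ρ') := by
    unfold WFam.norm2 WFam.inner
    rw [Finset.mul_sum]
    apply Finset.sum_congr rfl
    intro σ hσ
    have hc : σ.card = k + 1 := by
      simp only [WFam.dimFaces, Finset.mem_filter] at hσ; exact hσ.2
    rw [sDiffIter_one_apply k h σ hc, hBset σ hσ]
    set S := ∑ ρ ∈ (X.toWFam.dimFaces 1).filter (fun ρ => ρ ⊆ σ), h ρ with hS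
    calc X.w σ * ((c1 * S) * (c1 * S)) = (c1 * c1) * (X.w σ * (S * S)) := by ring
      _ = (c1 * c1) * (X.w σ * ∑ ρ ∈ (X.toWFam.dimFaces 1).filter (fun ρ => ρ ⊆ σ),
            ∑ ρ' ∈ (X.toWFam.dimFaces 1).filter (fun ρ' => ρ' ⊆ σ), h ρ * h ρ') := by
          rw [hS, Finset.sum_mul_sum]
      _ = _ := by congr 1; simp only [Finset.mul_sum]
  rw [claim0]
  congr 1
  have split : ∑ σ ∈ X.toWFam.dimFaces (k + 1),
        ∑ ρ ∈ (X.toWFam.dimFaces 1).filter (fun ρ => ρ ⊆ σ),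
          ∑ ρ' ∈ (X.toWFam.dimFaces 1).filter (fun ρ' => ρ' ⊆ σ), X.w σ * (h ρ * h ρ')
      = (∑ σ ∈ X.toWFam.dimFaces (k + 1),
          ∑ ρ ∈ (X.toWFam.dimFaces 1).filter (fun ρ => ρ ⊆ σ), X.w σ * (h ρ * h ρ))
        + ∑ σ ∈ X.toWFam.dimFaces (k + 1),
            ∑ ρ ∈ (X.toWFam.dimFaces 1).filter (fun ρ => ρ ⊆ σ),
              ∑ ρ' ∈ ((X.toWFam.dimFaces 1).filter (fun ρ' => ρ' ⊆ σ)).erase ρ,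
                X.w σ * (h ρ * h ρ') := by
    rw [← Finset.sum_add_distrib]
    apply Finset.sum_congr rfl
    intro σ _
    rw [← Finset.sum_add_distrib]
    apply Finset.sum_congr rfl
    intro ρ hρ
    exact (Finset.add_sum_erase _ _ hρ).symm
  rw [split]
  have hT1 : ∑ σ ∈ X.toWFam.dimFaces (k + 1),
        ∑ ρ ∈ (X.toWFam.dimFaces 1).filter (fun ρ => ρ ⊆ σ), X.w σ * (h ρ * h ρ)
      = ((k : ℝ) + 1) * X.toWFam.norm2 1 h := by
    rw [sum_swap_filter (X.toWFam.dimFaces (k + 1)) (X.toWFam.dimFaces 1)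
      (fun σ ρ => ρ ⊆ σ) (fun σ ρ => X.w σ * (h ρ * h ρ))]
    unfold WFam.norm2 WFam.inner
    rw [Finset.mul_sum]
    apply Finset.sum_congr rfl
    intro ρ hρ
    simp only [WFam.dimFaces, Finset.mem_filter] at hρ
    calc ∑ σ ∈ (X.toWFam.dimFaces (k + 1)).filter (fun σ => ρ ⊆ σ), X.w σ * (h ρ * h ρ)
        = (∑ σ ∈ (X.toWFam.dimFaces (k + 1)).filter (fun σ => ρ ⊆ σ), X.w σ)
            * (h ρ * h ρ) := by rw [Finset.sum_mul]
      _ = ((k + 1).choose ρ.card : ℝ) * X.w ρ * (h ρ * h ρ) := by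
          rw [sum_w_supersets X hρ.1 (by omega) (by omega)]
      _ = ((k : ℝ) + 1) * (X.w ρ * (h ρ * h ρ)) := by
          rw [hρ.2, Nat.choose_one_right]; push_cast; ring
  have hT2 : ∑ σ ∈ X.toWFam.dimFaces (k + 1),
        ∑ ρ ∈ (X.toWFam.dimFaces 1).filter (fun ρ => ρ ⊆ σ),
          ∑ ρ' ∈ ((X.toWFam.dimFaces 1).filter (fun ρ' => ρ' ⊆ σ)).erase ρ,
            X.w σ * (h ρ * h ρ')
      = (k : ℝ) * ((k : ℝ) + 1) * X.toWFam.inner 1 (X.toWFam.nonLazy 1 h) h := by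
    have hchoose : (((k + 1).choose 2 : ℕ) : ℝ) = (k : ℝ) * ((k : ℝ) + 1) / 2 := by
      rw [eq_div_iff (two_ne_zero)]
      rw [two_choose_two k]; ring
    calc ∑ σ ∈ X.toWFam.dimFaces (k + 1),
          ∑ ρ ∈ (X.toWFam.dimFaces 1).filter (fun ρ => ρ ⊆ σ),
            ∑ ρ' ∈ ((X.toWFam.dimFaces 1).filter (fun ρ' => ρ' ⊆ σ)).erase ρ,
              X.w σ * (h ρ * h ρ')
        = ∑ σ ∈ X.toWFam.dimFaces (k + 1),
            ∑ ρ ∈ (X.toWFam.dimFaces 1).filter (fun ρ => ρ ⊆ σ),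
              ∑ ρ' ∈ (X.toWFam.dimFaces 1).filter (fun ρ' => ρ' ⊆ σ ∧ ρ' ≠ ρ),
                X.w σ * (h ρ * h ρ') := by
          apply Finset.sum_congr rfl; intro σ _
          apply Finset.sum_congr rfl; intro ρ _
          rw [filter_erase_eq]
      _ = ∑ ρ ∈ X.toWFam.dimFaces 1,
            ∑ σ ∈ (X.toWFam.dimFaces (k + 1)).filter (fun σ => ρ ⊆ σ),
              ∑ ρ' ∈ (X.toWFam.dimFaces 1).filter (fun ρ' => ρ' ⊆ σ ∧ ρ' ≠ ρ),
                X.w σ * (h ρ * h ρ') :=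
          sum_swap_filter _ _ _ _
      _ = ∑ ρ ∈ X.toWFam.dimFaces 1, ∑ ρ' ∈ X.toWFam.dimFaces 1,
            ∑ σ ∈ ((X.toWFam.dimFaces (k + 1)).filter (fun σ => ρ ⊆ σ)).filter
                (fun σ => ρ' ⊆ σ ∧ ρ' ≠ ρ),
              X.w σ * (h ρ * h ρ') := by
          apply Finset.sum_congr rfl; intro ρ _
          exact sum_swap_filter ((X.toWFam.dimFaces (k + 1)).filter (fun σ => ρ ⊆ σ))
            (X.toWFam.dimFaces 1) (fun σ ρ' => ρ' ⊆ σ ∧ ρ' ≠ ρ)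
            (fun σ ρ' => X.w σ * (h ρ * h ρ'))
      _ = ∑ ρ ∈ X.toWFam.dimFaces 1, ∑ ρ' ∈ X.toWFam.dimFaces 1,
            (if ρ ∪ ρ' ∈ X.toWFam.dimFaces 2
              then ((k + 1).choose 2 : ℝ) * (X.w (ρ ∪ ρ') * (h ρ * h ρ')) else 0) := by
          apply Finset.sum_congr rfl; intro ρ hρ
          apply Finset.sum_congr rfl; intro ρ' hρ'
          simp only [WFam.dimFaces, Finset.mem_filter] at hρ hρ'
          by_cases hne : ρ' = ρ
          · have hempty : ((X.toWFam.dimFaces (k + 1)).filter (fun σ => ρ ⊆ σ)).filter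
                (fun σ => ρ' ⊆ σ ∧ ρ' ≠ ρ) = ∅ :=
              Finset.filter_false_of_mem (fun σ _ hcc => hcc.2 hne)
            have hnd : ρ ∪ ρ' ∉ X.toWFam.dimFaces 2 := by
              subst hne
              simp only [Finset.union_self, WFam.dimFaces, Finset.mem_filter]
              intro hcc
              omega
            rw [hempty, Finset.sum_empty, if_neg hnd]
          · have hseteq : ((X.toWFam.dimFaces (k + 1)).filter (fun σ => ρ ⊆ σ)).filter
                (fun σ => ρ' ⊆ σ ∧ ρ' ≠ ρ)
                = (X.toWFam.dimFaces (k + 1)).filter (fun σ => ρ ∪ ρ' ⊆ σ) := by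
              rw [Finset.filter_filter]
              apply Finset.filter_congr
              intro σ _
              constructor
              · rintro ⟨h1, h2, _⟩
                exact Finset.union_subset h1 h2
              · intro hu
                exact ⟨Finset.subset_union_left.trans hu,
                  Finset.subset_union_right.trans hu, hne⟩
            rw [hseteq]
            have hcard2 : (ρ ∪ ρ').card = 2 :=
              singleton_union_card hρ.2 hρ'.2 (Ne.symm hne)
            by_cases hmem : ρ ∪ ρ' ∈ X.faces
            · have hd2 : ρ ∪ ρ' ∈ X.toWFam.dimFaces 2 := by
                simp only [WFam.dimFaces, Finset.mem_filter]
                exact ⟨hmem, hcard2⟩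
              rw [if_pos hd2, ← Finset.sum_mul,
                sum_w_supersets X hmem (by omega) (by omega), hcard2]
              ring
            · have hnd : ρ ∪ ρ' ∉ X.toWFam.dimFaces 2 := by
                simp only [WFam.dimFaces, Finset.mem_filter]
                exact fun hcc => hmem hcc.1
              have hempty : (X.toWFam.dimFaces (k + 1)).filter (fun σ => ρ ∪ ρ' ⊆ σ) = ∅ := by
                apply Finset.filter_false_of_mem
                intro σ hσ hsub
                simp only [WFam.dimFaces, Finset.mem_filter] at hσ
                exact hmem (X.down_closed hσ.1 hsub)
              rw [if_neg hnd, hempty, Finset.sum_empty]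
      _ = ∑ ρ ∈ X.toWFam.dimFaces 1,
            ∑ ρ' ∈ (X.toWFam.dimFaces 1).filter (fun ρ' => ρ ∪ ρ' ∈ X.toWFam.dimFaces 2),
              ((k + 1).choose 2 : ℝ) * (X.w (ρ ∪ ρ') * (h ρ * h ρ')) := by
          apply Finset.sum_congr rfl; intro ρ _
          rw [Finset.sum_filter]
      _ = (k : ℝ) * ((k : ℝ) + 1) * X.toWFam.inner 1 (X.toWFam.nonLazy 1 h) h := by
          rw [inner_nonLazy_eq X h, Finset.mul_sum]
          apply Finset.sum_congr rfl; intro ρ _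
          rw [Finset.mul_sum]
          apply Finset.sum_congr rfl; intro ρ' _
          rw [hchoose]
          ring
  rw [hT1, hT2]

/-- The expander parameter `γ` of a complex with enough vertices satisfies
`1 + kγ ≥ 0` (trace-type bound via an explicit test function). -/
lemma gamma_lb (X : WSC V d) (γ : ℝ) (hexp : X.toWFam.isExpander γ)
    {k : ℕ} (hk1 : 1 ≤ k) (hk : k ≤ d) : 0 ≤ 1 + (k : ℝ) * γ := by
  rcases le_or_gt 0 γ with hγ | hγ
  · have : 0 ≤ (k : ℝ) * γ := mul_nonneg (by positivity) hγ
    linarith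
  have hd : 1 ≤ d := le_trans hk1 hk
  obtain ⟨T, hT, -, hTc⟩ := X.isPure ∅ X.empty_mem
  have sum1 : ∑ τ ∈ X.toWFam.dimFaces 1, X.w τ = 1 := sum_w_dimFaces X (by omega)
  have hcard : d + 1 ≤ (X.toWFam.dimFaces 1).card := by
    have himg : T.image (fun v => ({v} : Finset V)) ⊆ X.toWFam.dimFaces 1 := by
      intro s hs
      simp only [Finset.mem_image] at hs
      obtain ⟨v, hv, rfl⟩ := hs
      simp only [WFam.dimFaces, Finset.mem_filter]
      exact ⟨X.down_closed hT (Finset.singleton_subset_iff.mpr hv), Finset.card_singleton v⟩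
    calc d + 1 = T.card := hTc.symm
      _ = (T.image (fun v => ({v} : Finset V))).card :=
          (Finset.card_image_of_injective T (fun a b hab => by simpa using hab)).symm
      _ ≤ _ := Finset.card_le_card himg
  have hne : (X.toWFam.dimFaces 1).Nonempty := Finset.card_pos.mp (by omega)
  have hex : ∃ τ₀ ∈ X.toWFam.dimFaces 1, X.w τ₀ * ((k : ℝ) + 1) ≤ 1 := by
    by_contra hcon
    push_neg at hcon
    have hkpos : (0 : ℝ) < (k : ℝ) + 1 := by positivity
    have hlt : ∑ τ ∈ X.toWFam.dimFaces 1, (1 : ℝ) / ((k : ℝ) + 1)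
        < ∑ τ ∈ X.toWFam.dimFaces 1, X.w τ := by
      apply Finset.sum_lt_sum_of_nonempty hne
      intro τ hτ
      have := hcon τ hτ
      rw [div_lt_iff₀ hkpos]
      linarith
    rw [sum1, Finset.sum_const] at hlt
    simp only [nsmul_eq_mul] at hlt
    have hge : (1 : ℝ) ≤ ((X.toWFam.dimFaces 1).card : ℝ) * (1 / ((k : ℝ) + 1)) := by
      rw [mul_one_div, le_div_iff₀ hkpos, one_mul]
      have h1 : ((k : ℝ)) + 1 ≤ (d : ℝ) + 1 := by
        have : (k : ℝ) ≤ (d : ℝ) := by exact_mod_cast hk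
        linarith
      have h2 : ((d : ℝ)) + 1 ≤ ((X.toWFam.dimFaces 1).card : ℝ) := by exact_mod_cast hcard
      linarith
    linarith
  obtain ⟨τ₀, hτ₀, hτ₀w⟩ := hex
  have hτ₀m : τ₀ ∈ X.faces ∧ τ₀.card = 1 := by
    simpa [WFam.dimFaces, Finset.mem_filter] using hτ₀
  have hwpos : 0 < X.w τ₀ := X.w_pos τ₀ hτ₀m.1
  set a : ℝ := (X.w τ₀)⁻¹ with ha
  have hainv : a * X.w τ₀ = 1 := inv_mul_cancel₀ (ne_of_gt hwpos)
  -- orthogonality of the test function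
  have horth : X.toWFam.inner 1 (fun s => (if s = τ₀ then a else 0) - 1) (fun _ => 1) = 0 := by
    simp only [WFam.inner]
    have hcongr : ∀ τ ∈ X.toWFam.dimFaces 1,
        X.w τ * (((if τ = τ₀ then a else 0) - 1) * 1)
          = (if τ = τ₀ then a * X.w τ₀ else 0) - X.w τ := by
      intro τ _
      split_ifs with hττ
      · rw [hττ]; ring
      · ring
    rw [Finset.sum_congr rfl hcongr, Finset.sum_sub_distrib,
      Finset.sum_ite_eq' _ τ₀ (fun _ => a * X.w τ₀), if_pos hτ₀, sum1, hainv]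
    ring
  -- norm of the test function
  have hnorm : X.toWFam.norm2 1 (fun s => (if s = τ₀ then a else 0) - 1) = a - 1 := by
    simp only [WFam.norm2, WFam.inner]
    have hcongr : ∀ τ ∈ X.toWFam.dimFaces 1,
        X.w τ * (((if τ = τ₀ then a else 0) - 1) * ((if τ = τ₀ then a else 0) - 1))
          = (if τ = τ₀ then a * (a * X.w τ₀) - 2 * (a * X.w τ₀) else 0) + X.w τ := by
      intro τ _
      split_ifs with hττ
      · rw [hττ]; ring
      · ring
    rw [Finset.sum_congr rfl hcongr, Finset.sum_add_distrib,
      Finset.sum_ite_eq' _ τ₀ (fun _ => a * (a * X.w τ₀) - 2 * (a * X.w τ₀)), if_pos hτ₀,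
      sum1, hainv]
    ring
  -- quadratic form of the walk at the test function
  have hMval : X.toWFam.inner 1
      (X.toWFam.nonLazy 1 (fun s => (if s = τ₀ then a else 0) - 1))
      (fun s => (if s = τ₀ then a else 0) - 1) = -1 := by
    rw [inner_nonLazy_eq]
    have hper : ∀ σ ∈ X.toWFam.dimFaces 1,
        ∑ τ ∈ (X.toWFam.dimFaces 1).filter (fun τ => σ ∪ τ ∈ X.toWFam.dimFaces 2),
          2⁻¹ * (X.w (σ ∪ τ) * (((if σ = τ₀ then a else 0) - 1)
            * ((if τ = τ₀ then a else 0) - 1)))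
        = 2⁻¹ * (2 * X.w σ) - (if σ = τ₀ then 2⁻¹ * a * (2 * X.w σ) else 0)
          - 2⁻¹ * a * (if σ ∪ τ₀ ∈ X.toWFam.dimFaces 2 then X.w (σ ∪ τ₀) else 0) := by
      intro σ hσ
      have hσm : σ ∈ X.faces ∧ σ.card = 1 := by
        simpa [WFam.dimFaces, Finset.mem_filter] using hσ
      have hterm : ∀ τ ∈ (X.toWFam.dimFaces 1).filter
            (fun τ => σ ∪ τ ∈ X.toWFam.dimFaces 2),
          2⁻¹ * (X.w (σ ∪ τ) * (((if σ = τ₀ then a else 0) - 1)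
              * ((if τ = τ₀ then a else 0) - 1)))
            = 2⁻¹ * X.w (σ ∪ τ) - (if σ = τ₀ then 2⁻¹ * a * X.w (σ ∪ τ) else 0)
              - (if τ = τ₀ then 2⁻¹ * a * X.w (σ ∪ τ) else 0) := by
        intro τ hτ
        simp only [WFam.dimFaces, Finset.mem_filter] at hτ
        have hneστ : σ ≠ τ := ne_of_union_card hσm.2 hτ.2.2
        by_cases h1 : σ = τ₀ <;> by_cases h2 : τ = τ₀
        · exact absurd (h1.trans h2.symm) hneστ
        · simp only [if_pos h1, if_neg h2]; ring
        · simp only [if_neg h1, if_pos h2]; ring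
        · simp only [if_neg h1, if_neg h2]; ring
      rw [Finset.sum_congr rfl hterm, Finset.sum_sub_distrib, Finset.sum_sub_distrib]
      congr 1
      · congr 1
        · rw [← Finset.mul_sum, edge_sum X hd hσ]
        · by_cases h1 : σ = τ₀
          · simp only [if_pos h1]
            rw [← Finset.mul_sum, edge_sum X hd hσ]
          · simp only [if_neg h1, Finset.sum_const_zero]
      · rw [Finset.sum_ite_eq' _ τ₀ (fun τ => 2⁻¹ * a * X.w (σ ∪ τ))]
        by_cases hc : σ ∪ τ₀ ∈ X.toWFam.dimFaces 2
        · have hmemf : τ₀ ∈ (X.toWFam.dimFaces 1).filter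
              (fun τ => σ ∪ τ ∈ X.toWFam.dimFaces 2) := Finset.mem_filter.mpr ⟨hτ₀, hc⟩
          rw [if_pos hmemf, if_pos hc]
        · have hmemf : τ₀ ∉ (X.toWFam.dimFaces 1).filter
              (fun τ => σ ∪ τ ∈ X.toWFam.dimFaces 2) :=
            fun hmem => hc (Finset.mem_filter.mp hmem).2
          rw [if_neg hmemf, if_neg hc]
          ring
    rw [Finset.sum_congr rfl hper, Finset.sum_sub_distrib, Finset.sum_sub_distrib]
    have p1 : ∑ σ ∈ X.toWFam.dimFaces 1, 2⁻¹ * (2 * X.w σ) = 1 := by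
      rw [Finset.sum_congr rfl (fun σ _ => by ring : ∀ σ ∈ X.toWFam.dimFaces 1,
        2⁻¹ * (2 * X.w σ) = X.w σ), sum1]
    have p2 : ∑ σ ∈ X.toWFam.dimFaces 1,
        (if σ = τ₀ then 2⁻¹ * a * (2 * X.w σ) else 0) = 1 := by
      rw [Finset.sum_ite_eq' _ τ₀ (fun σ => 2⁻¹ * a * (2 * X.w σ)), if_pos hτ₀]
      linear_combination hainv
    have p3 : ∑ σ ∈ X.toWFam.dimFaces 1,
        2⁻¹ * a * (if σ ∪ τ₀ ∈ X.toWFam.dimFaces 2 then X.w (σ ∪ τ₀) else 0) = 1 := by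
      rw [← Finset.mul_sum]
      have hinner : ∑ σ ∈ X.toWFam.dimFaces 1,
          (if σ ∪ τ₀ ∈ X.toWFam.dimFaces 2 then X.w (σ ∪ τ₀) else 0) = 2 * X.w τ₀ := by
        rw [← Finset.sum_filter]
        have hsetc : (X.toWFam.dimFaces 1).filter (fun σ => σ ∪ τ₀ ∈ X.toWFam.dimFaces 2)
            = (X.toWFam.dimFaces 1).filter (fun σ => τ₀ ∪ σ ∈ X.toWFam.dimFaces 2) := by
          apply Finset.filter_congr
          intro σ _
          rw [Finset.union_comm]
        rw [hsetc,
          Finset.sum_congr rfl (fun σ _ => by rw [Finset.union_comm σ τ₀])]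
        exact edge_sum X hd hτ₀
      rw [hinner]
      linear_combination hainv
    rw [p1, p2, p3]
    norm_num
  have hbound := hexp _ horth
  rw [hMval, hnorm] at hbound
  have hka : (k : ℝ) + 1 ≤ a := by
    have h1 : ((k : ℝ) + 1) * X.w τ₀ ≤ 1 := by linarith [hτ₀w]
    have h2 : ((k : ℝ) + 1) * X.w τ₀ ≤ a * X.w τ₀ := by rw [hainv]; exact h1
    exact le_of_mul_le_mul_right h2 hwpos
  nlinarith [mul_nonneg (by linarith : (0 : ℝ) ≤ a - 1 - (k : ℝ))
    (by linarith : (0 : ℝ) ≤ -γ), hbound]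


end Aux

/-- If the 1-skeleton of `(X, w)` is a `γ`-spectral expander,
`1 ≤ k ≤ d`, and `f ∈ C^k(X;ℝ)` satisfies `⟨f, 1⟩ = 0` (a `0`-level cochain
with respect to localization), then
`‖d_0^* ⋯ d_{k-1}^* f‖² ≤ (1 - (k/(k+1))(1-γ)) ‖f‖²`. -/
theorem advantage (X : WSC V d) (γ : ℝ) (hexp : X.toWFam.isExpander γ)
    (k : ℕ) (hk1 : 1 ≤ k) (hk : k ≤ d) (f : Finset V → ℝ)
    (hf : X.toWFam.inner (k + 1) f (fun _ => 1) = 0) :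
    X.toWFam.norm2 1 (X.toWFam.sAdjIter 1 k f) ≤
      (1 - ((k : ℝ) / ((k : ℝ) + 1)) * (1 - γ)) * X.toWFam.norm2 (k + 1) f := by
  have hd : 1 ≤ d := le_trans hk1 hk
  set h := X.toWFam.sAdjIter 1 k f with hh
  set N := X.toWFam.norm2 1 h with hN
  set F := X.toWFam.norm2 (k + 1) f with hF
  set M := X.toWFam.inner 1 (X.toWFam.nonLazy 1 h) h with hM
  have horth : X.toWFam.inner 1 h (fun _ => 1) = 0 := by
    rw [hh, inner_one_sAdjIter X 1 k f, Nat.add_comm 1 k]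
    exact hf
  have hMb : M ≤ γ * N := hexp h horth
  have hDk := norm2_sDiffIter X hk1 hk h
  rw [← hN, ← hM] at hDk
  have hadj : X.toWFam.inner (1 + k) (sDiffIter 1 k h) f = N := by
    rw [inner_sDiffIter X 1 k h f, ← hh, hN]
    rfl
  have hCS := inner_sq_le X (1 + k) (sDiffIter 1 k h) f
  rw [hadj, Nat.add_comm 1 k, hDk, ← hF] at hCS
  have hkR : (0 : ℝ) < (k : ℝ) + 1 := by positivity
  have hNnn : 0 ≤ N := by rw [hN]; exact norm2_nonneg X 1 h
  have hFnn : 0 ≤ F := by rw [hF]; exact norm2_nonneg X (k + 1) f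
  have hconst : 1 - ((k : ℝ) / ((k : ℝ) + 1)) * (1 - γ) = (1 + (k : ℝ) * γ) / ((k : ℝ) + 1) := by
    field_simp
    ring
  rw [hconst]
  have hkey : N ^ 2 ≤ (1 + (k : ℝ) * γ) / ((k : ℝ) + 1) * F * N := by
    calc N ^ 2
        ≤ (((k : ℝ) + 1)⁻¹ * ((k : ℝ) + 1)⁻¹) *
            (((k : ℝ) + 1) * N + (k : ℝ) * ((k : ℝ) + 1) * M) * F := hCS
      _ ≤ (((k : ℝ) + 1)⁻¹ * ((k : ℝ) + 1)⁻¹) *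
            (((k : ℝ) + 1) * N + (k : ℝ) * ((k : ℝ) + 1) * (γ * N)) * F := by
          apply mul_le_mul_of_nonneg_right _ hFnn
          apply mul_le_mul_of_nonneg_left _ (by positivity)
          exact add_le_add (le_refl _) (mul_le_mul_of_nonneg_left hMb (by positivity))
      _ = (1 + (k : ℝ) * γ) / ((k : ℝ) + 1) * F * N := by
          field_simp
  rcases eq_or_lt_of_le hNnn with hN0 | hN0
  · rw [← hN0]
    exact mul_nonneg (div_nonneg (gamma_lb X γ hexp hk1 hk) hkR.le) hFnn
  · nlinarith [hkey, hN0]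


end

end HDRW
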